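/- For real numbers a, b ∈ (-1, -1/2) and any s₁, s₂ ∈ ℝ, the Lebesgue integral over u ∈ ℝ of (s₁-u)₊^a · (s₂-u)₊^b equals (s₂-s₁)₊^{a+b+1} · B(a+1, -a-b-1) + (s₁-s₂)₊^{a+b+1} · B(b+1, -a-b-1), where x₊ = max(x,0) and 0 raised to a negative power is interpreted as 0 on the set where the integrand vanishes. -/

import Mathlib

open MeasureTheory

/-- The Euler beta function `B(x,y) = Γ(x)Γ(y)/Γ(x+y)`. -/
noncomputable def eulerBeta (x y : ℝ) : ℝ := Real.Gamma x * Real.Gamma y / Real.Gamma (x + y)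

lemma realBeta (p q : ℝ) (hp : 0 < p) (hq : 0 < q) :
    ∫ x in Set.Ioo (0:ℝ) 1, x ^ (p - 1) * (1 - x) ^ (q - 1) = eulerBeta p q := by
  have key := Complex.Gamma_mul_Gamma_eq_betaIntegral (s := (p:ℂ)) (t := (q:ℂ))
    (by simpa using hp) (by simpa using hq)
  rw [Complex.betaIntegral] at key
  have hcongr : ∀ x ∈ Set.uIcc (0:ℝ) 1,
      (x:ℂ) ^ ((p:ℂ) - 1) * ((1:ℂ) - x) ^ ((q:ℂ) - 1)
        = ((x ^ (p - 1) * (1 - x) ^ (q - 1) : ℝ) : ℂ) := by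
    intro x hx
    rw [Set.uIcc_of_le (by norm_num)] at hx
    rw [Complex.ofReal_mul, Complex.ofReal_cpow hx.1,
      Complex.ofReal_cpow (by linarith [hx.2] : (0:ℝ) ≤ 1 - x)]
    push_cast
    ring
  rw [intervalIntegral.integral_congr hcongr, intervalIntegral.integral_ofReal] at key
  have h1 : (∫ x in (0:ℝ)..1, x ^ (p - 1) * (1 - x) ^ (q - 1))
      = ∫ x in Set.Ioo (0:ℝ) 1, x ^ (p - 1) * (1 - x) ^ (q - 1) := by
    rw [intervalIntegral.integral_of_le (by norm_num), integral_Ioc_eq_integral_Ioo]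
  rw [h1] at key
  rw [show ((p:ℂ) + (q:ℂ)) = ((p + q : ℝ) : ℂ) by push_cast; ring, Complex.Gamma_ofReal,
    Complex.Gamma_ofReal, Complex.Gamma_ofReal] at key
  have key2 : Real.Gamma p * Real.Gamma q
      = Real.Gamma (p + q) * ∫ x in Set.Ioo (0:ℝ) 1, x ^ (p - 1) * (1 - x) ^ (q - 1) := by
    exact_mod_cast key
  rw [eulerBeta, key2, mul_comm, mul_div_assoc,
    div_self (Real.Gamma_pos_of_pos (show (0:ℝ) < p + q by linarith)).ne', mul_one]

lemma auxMain (a b : ℝ) (ha : -1 < a) (ha0 : a < 0) (hab : a + b < -1) (s₁ s₂ : ℝ)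
    (h : s₁ < s₂) :
    (∫ u : ℝ, (max (s₁ - u) 0) ^ a * (max (s₂ - u) 0) ^ b)
      = (s₂ - s₁) ^ (a + b + 1) * eulerBeta (a + 1) (-a - b - 1) := by
  set c := s₂ - s₁ with hc
  have hc0 : 0 < c := by simp only [hc]; linarith
  set g : ℝ → ℝ := fun u => (max (s₁ - u) 0) ^ a * (max (s₂ - u) 0) ^ b with hg
  set f : ℝ → ℝ := fun x => s₁ - c * x / (1 - x) with hf
  have hzero : ∀ u, u ∉ Set.Iio s₁ → g u = 0 := by
    intro u hu
    have hm : max (s₁ - u) 0 = 0 := max_eq_right (by simp only [Set.mem_Iio, not_lt] at hu; linarith)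
    simp [hg, hm, Real.zero_rpow (by linarith : a ≠ 0)]
  have himg : f '' Set.Ioo 0 1 = Set.Iio s₁ := by
    ext u
    constructor
    · rintro ⟨x, ⟨hx0, hx1⟩, rfl⟩
      have h1x : 0 < 1 - x := by linarith
      have : 0 < c * x / (1 - x) := by positivity
      simp only [hf, Set.mem_Iio]; linarith
    · intro hu
      simp only [Set.mem_Iio] at hu
      set t := s₁ - u with ht
      have ht0 : 0 < t := by simp only [ht]; linarith
      refine ⟨t / (c + t), ⟨by positivity, by rw [div_lt_one (by linarith)]; linarith⟩, ?_⟩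
      simp only [hf]
      have h1 : 1 - t / (c + t) = c / (c + t) := by field_simp; ring
      rw [h1]
      have hct : (c + t) ≠ 0 := by positivity
      have h2 : c * (t / (c + t)) / (c / (c + t)) = t := by field_simp
      rw [h2, ht]; ring
  have hderiv : ∀ x ∈ Set.Ioo (0:ℝ) 1,
      HasDerivWithinAt f (-(c / (1 - x) ^ 2)) (Set.Ioo 0 1) x := by
    intro x hx
    have h1x : (1 : ℝ) - x ≠ 0 := by
      have := hx.2; intro hcon; simp only [Set.mem_Ioo] at hx; linarith [sub_eq_zero.mp hcon]
    have hd : HasDerivAt (fun x : ℝ => s₁ - c * x / (1 - x)) (-(c / (1 - x) ^ 2)) x := by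
      have h1 : HasDerivAt (fun x : ℝ => c * x) c x := by
        simpa using (hasDerivAt_id x).const_mul c
      have h2 : HasDerivAt (fun x : ℝ => 1 - x) (-1) x := by
        simpa using (hasDerivAt_id x).const_sub 1
      have h3 := (h1.div h2 h1x)
      have h4 := h3.const_sub s₁
      convert h4 using 1
      · rfl
      · rfl
      · rfl
      · ring
    exact hd.hasDerivWithinAt
  have hinj : Set.InjOn f (Set.Ioo 0 1) := by
    rintro x ⟨hx0, hx1⟩ y ⟨hy0, hy1⟩ hxy
    simp only [hf] at hxy
    have h1x : (1:ℝ) - x ≠ 0 := by linarith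
    have h1y : (1:ℝ) - y ≠ 0 := by linarith
    have : c * x * (1 - y) = c * y * (1 - x) := by
      field_simp at hxy
      linarith [hxy]
    have : x * (1 - y) = y * (1 - x) := by
      have hcne : c ≠ 0 := hc0.ne'
      apply mul_left_cancel₀ hcne
      ring_nf
      ring_nf at this
      linarith
    nlinarith
  rw [← setIntegral_eq_integral_of_forall_compl_eq_zero hzero, ← himg,
    integral_image_eq_integral_abs_deriv_smul measurableSet_Ioo hderiv hinj]
  have hcongr : ∀ x ∈ Set.Ioo (0:ℝ) 1,
      |(-(c / (1 - x) ^ 2))| • g (f x)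
        = c ^ (a + b + 1) * (x ^ (a + 1 - 1) * (1 - x) ^ (-a - b - 1 - 1)) := by
    intro x hx
    obtain ⟨hx0, hx1⟩ := hx
    have h1x : 0 < 1 - x := by linarith
    have habs : |(-(c / (1 - x) ^ 2))| = c / (1 - x) ^ 2 := by
      rw [abs_neg, abs_of_pos (by positivity)]
    have e1 : s₁ - f x = c * x / (1 - x) := by simp only [hf]; ring
    have e2 : s₂ - f x = c / (1 - x) := by
      simp only [hf, hc]; field_simp; ring
    have hpos1 : 0 < c * x / (1 - x) := by positivity
    have hpos2 : 0 < c / (1 - x) := by positivity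
    rw [habs, smul_eq_mul, hg]
    simp only [e1, e2, max_eq_left hpos1.le, max_eq_left hpos2.le]
    rw [Real.div_rpow (by positivity) h1x.le, Real.mul_rpow hc0.le hx0.le,
      Real.div_rpow hc0.le h1x.le]
    have hcab : c ^ (a + b + 1) = c ^ a * c ^ b * c := by
      rw [Real.rpow_add hc0, Real.rpow_add hc0, Real.rpow_one]
    have h1xab : (1 - x) ^ (-a - b - 1 - 1)
        = ((1 - x) ^ a)⁻¹ * ((1 - x) ^ b)⁻¹ * ((1 - x) ^ 2)⁻¹ := by
      rw [show (-a - b - 1 - 1 : ℝ) = (-a) + (-b) + (-(2:ℝ)) by ring,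
        Real.rpow_add h1x, Real.rpow_add h1x, Real.rpow_neg h1x.le, Real.rpow_neg h1x.le,
        Real.rpow_neg h1x.le, Real.rpow_two]
    have hxa : x ^ (a + 1 - 1) = x ^ a := by norm_num
    rw [hcab, h1xab, hxa]
    have n1 : (1 - x) ^ a ≠ 0 := (Real.rpow_pos_of_pos h1x a).ne'
    have n2 : (1 - x) ^ b ≠ 0 := (Real.rpow_pos_of_pos h1x b).ne'
    field_simp
  rw [setIntegral_congr_fun measurableSet_Ioo hcongr, integral_const_mul,
    realBeta (a + 1) (-a - b - 1) (by linarith) (by linarith)]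

lemma auxDiag (a b : ℝ) (ha0 : a < 0) (hab : a + b < -1) (s : ℝ) :
    ¬ Integrable (fun u : ℝ => (max (s - u) 0) ^ a * (max (s - u) 0) ^ b) := by
  intro hi
  have h1 : IntegrableOn (fun u : ℝ => (max (s - u) 0) ^ a * (max (s - u) 0) ^ b)
      (Set.Ioo (s - 1) s) := hi.integrableOn
  have h2 : IntegrableOn (fun u : ℝ => (s - u) ^ (a + b)) (Set.Ioo (s - 1) s) := by
    refine h1.congr_fun (fun u hu => ?_) measurableSet_Ioo
    obtain ⟨hu1, hu2⟩ := hu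
    have hpos : 0 < s - u := by linarith
    beta_reduce
    rw [max_eq_left hpos.le, ← Real.rpow_add hpos]
  have h3 : IntervalIntegrable (fun u : ℝ => (s - u) ^ (a + b)) volume (s - 1) s := by
    rwa [intervalIntegrable_iff_integrableOn_Ioo_of_le (by linarith)]
  have h4 := h3.comp_sub_left s
  simp only [sub_sub_cancel, sub_self] at h4
  have h5 : IntegrableOn (fun x : ℝ => x ^ (a + b)) (Set.Ioo (0:ℝ) 1) := by
    have := h4.symm
    rwa [intervalIntegrable_iff_integrableOn_Ioo_of_le (by norm_num)] at this
  rw [intervalIntegral.integrableOn_Ioo_rpow_iff one_pos] at h5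
  linarith

/-- For `a, b ∈ (-1, -1/2)` and any `s₁, s₂ ∈ ℝ`,
`∫_ℝ (s₁-u)₊^a (s₂-u)₊^b du
  = (s₂-s₁)₊^{a+b+1} B(a+1, -a-b-1) + (s₁-s₂)₊^{a+b+1} B(b+1, -a-b-1)`. -/
theorem integral_posPart_rpow_mul_posPart_rpow
    (a b : ℝ) (ha : a ∈ Set.Ioo (-1 : ℝ) (-1/2)) (hb : b ∈ Set.Ioo (-1 : ℝ) (-1/2))
    (s₁ s₂ : ℝ) :
    (∫ u : ℝ, (max (s₁ - u) 0) ^ a * (max (s₂ - u) 0) ^ b)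
      = (max (s₂ - s₁) 0) ^ (a + b + 1) * eulerBeta (a + 1) (-a - b - 1)
        + (max (s₁ - s₂) 0) ^ (a + b + 1) * eulerBeta (b + 1) (-a - b - 1) := by
  obtain ⟨ha1, ha2⟩ := ha
  obtain ⟨hb1, hb2⟩ := hb
  have hab : a + b < -1 := by linarith
  have habne : a + b + 1 ≠ 0 := by linarith
  rcases lt_trichotomy s₁ s₂ with h | h | h
  · rw [auxMain a b ha1 (by linarith) hab s₁ s₂ h,
      max_eq_left (by linarith : (0:ℝ) ≤ s₂ - s₁),
      max_eq_right (by linarith : s₁ - s₂ ≤ 0), Real.zero_rpow habne, zero_mul, add_zero]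
  · subst h
    rw [integral_undef (auxDiag a b (by linarith) hab s₁), sub_self, max_self,
      Real.zero_rpow habne, zero_mul, zero_mul, add_zero]
  · have hcomm : (∫ u : ℝ, (max (s₁ - u) 0) ^ a * (max (s₂ - u) 0) ^ b)
        = ∫ u : ℝ, (max (s₂ - u) 0) ^ b * (max (s₁ - u) 0) ^ a := by
      congr 1; funext u; ring
    rw [hcomm, auxMain b a hb1 (by linarith) (by linarith) s₂ s₁ h,
      max_eq_left (by linarith : (0:ℝ) ≤ s₁ - s₂),
      max_eq_right (by linarith : s₂ - s₁ ≤ 0), Real.zero_rpow habne, zero_mul, zero_add,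
      show b + a + 1 = a + b + 1 by ring, show -b - a - 1 = -a - b - 1 by ring]
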